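/- For any real n×n matrices A and B, exp(A) − exp(B) = ∫₀¹ exp(t·A) · (A − B) · exp((1−t)·B) dt. -/

import Mathlib

/- STATEMENT 1: Duhamel-type integral formula for the difference of two
matrix exponentials:
exp A − exp B = ∫₀¹ exp(t•A) * (A − B) * exp((1−t)•B) dt. -/

attribute [local instance] Matrix.linftyOpNormedAddCommGroup Matrix.linftyOpNormedRing
  Matrix.linftyOpNormedAlgebra

theorem matrix_exp_sub_exp {n : ℕ} (A B : Matrix (Fin n) (Fin n) ℝ) :
    NormedSpace.exp A - NormedSpace.exp B =
      ∫ t in (0:ℝ)..1,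
        NormedSpace.exp (t • A) * (A - B) * NormedSpace.exp ((1 - t) • B) := by
  have hderiv : ∀ t ∈ Set.uIcc (0:ℝ) 1,
      HasDerivAt (fun t : ℝ =>
          NormedSpace.exp (t • A) * NormedSpace.exp ((1 - t) • B))
        (NormedSpace.exp (t • A) * (A - B) * NormedSpace.exp ((1 - t) • B)) t := by
    intro t _
    have h1 : HasDerivAt (fun t : ℝ => NormedSpace.exp (t • A))
        (NormedSpace.exp (t • A) * A) t := hasDerivAt_exp_smul_const A t
    have h2 : HasDerivAt (fun t : ℝ => NormedSpace.exp ((1 - t) • B))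
        ((-1 : ℝ) • (B * NormedSpace.exp ((1 - t) • B))) t := by
      have hin : HasDerivAt (fun x : ℝ => 1 - x) (-1 : ℝ) t := by
        simpa using (hasDerivAt_id t).const_sub 1
      have := (hasDerivAt_exp_smul_const' B (1 - t)).scomp t hin
      simp only [neg_smul, Function.comp_def] at this ⊢
      exact this
    have := h1.mul h2
    refine this.congr_deriv ?_
    simp only [neg_one_smul]
    noncomm_ring
  have hcont : Continuous (fun t : ℝ =>
      NormedSpace.exp (t • A) * (A - B) * NormedSpace.exp ((1 - t) • B)) := by
    exact ((NormedSpace.exp_continuous.comp (continuous_id.smul continuous_const)).mul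
      continuous_const).mul (NormedSpace.exp_continuous.comp
        ((continuous_const.sub continuous_id).smul continuous_const))
  have := intervalIntegral.integral_eq_sub_of_hasDerivAt hderiv
    (hcont.intervalIntegrable 0 1)
  rw [this]
  simp [NormedSpace.exp_zero]
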